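/- Let A be a unital ℂ-algebra and let φ̃ : A → G be a ℂ-linear map with φ̃(1) = 1, with G-valued cumulant functionals (κ̃_n)_{n≥1}. Let B be a unital subalgebra of A such that φ̃ is a trace on B, i.e., φ̃(bc) = φ̃(cb) for all b, c ∈ B. Then for every n ≥ 2 and all b_1, ..., b_n ∈ B one has the cyclic invariance κ̃_n(b_1, b_2, ..., b_n) = κ̃_n(b_2, b_3, ..., b_n, b_1). -/

import Mathlib

namespace InfFree

open scoped BigOperators

/-- `π` is a partition of `Fin n` into nonempty blocks. -/
def IsPartition {n : ℕ} (π : Finset (Finset (Fin n))) : Prop :=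
  (∀ V ∈ π, V.Nonempty) ∧ ∀ i : Fin n, ∃! V : Finset (Fin n), V ∈ π ∧ i ∈ V

/-- `π` is non-crossing: there are no `p < q < r < s` with `p, r` in one block and
`q, s` in another block. -/
def IsNonCrossing {n : ℕ} (π : Finset (Finset (Fin n))) : Prop :=
  ∀ p q r s : Fin n, p < q → q < r → r < s →
    ∀ V ∈ π, ∀ W ∈ π, p ∈ V → r ∈ V → q ∈ W → s ∈ W → V = W

open Classical in
/-- The finset `NC n` of non-crossing partitions of `Fin n`. -/
noncomputable def NC (n : ℕ) : Finset (Finset (Finset (Fin n))) :=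
  Finset.univ.filter fun π => IsPartition π ∧ IsNonCrossing π

/-- Restriction of an `n`-tuple to a subset `V ⊆ Fin n`, listed in increasing order. -/
def restrict {α : Type*} {n : ℕ} (a : Fin n → α) (V : Finset (Fin n)) :
    Fin V.card → α :=
  fun i => a (V.orderIsoOfFin rfl i).1

/-- `κ` is the family of `R`-valued non-crossing cumulant functionals of `φ`, i.e.
the moment-cumulant formulas hold. -/
def MomentCumulant {A : Type*} [Ring A] {R : Type*} [CommRing R]
    (φ : A → R) (κ : ∀ n : ℕ, (Fin n → A) → R) : Prop :=
  ∀ (n : ℕ), 1 ≤ n → ∀ a : Fin n → A,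
    φ (List.ofFn a).prod = ∑ π ∈ NC n, ∏ V ∈ π, κ V.card (restrict a V)

/-- `κ'` is the family of infinitesimal non-crossing cumulant functionals of
`(φ, φ')`, where `κ` is the family of non-crossing cumulant functionals of `φ`. -/
def InfMomentCumulant {A : Type*} [Ring A]
    (φ' : A → ℂ) (κ κ' : ∀ n : ℕ, (Fin n → A) → ℂ) : Prop :=
  ∀ (n : ℕ), 1 ≤ n → ∀ a : Fin n → A,
    φ' (List.ofFn a).prod =
      ∑ π ∈ NC n, ∑ V ∈ π,
        κ' V.card (restrict a V) * ∏ W ∈ π.erase V, κ W.card (restrict a W)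

/-- Consecutive indices are distinct. -/
def Alternating {n k : ℕ} (i : Fin n → Fin k) : Prop :=
  ∀ (m : ℕ) (h : m + 1 < n), i ⟨m, Nat.lt_of_succ_lt h⟩ ≠ i ⟨m + 1, h⟩

/-- Freeness of the family of subsets `S` with respect to `φ`. -/
def FreeSets {A : Type*} [Ring A] {k : ℕ} (φ : A → ℂ) (S : Fin k → Set A) : Prop :=
  ∀ (n : ℕ), 1 ≤ n → ∀ i : Fin n → Fin k, Alternating i →
    ∀ a : Fin n → A, (∀ m, a m ∈ S (i m)) → (∀ m, φ (a m) = 0) →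
      φ (List.ofFn a).prod = 0

/-- Infinitesimal freeness of the family of subsets `S` with respect to `(φ, φ')`. -/
def InfFreeSets {A : Type*} [Ring A] {k : ℕ} (φ φ' : A → ℂ) (S : Fin k → Set A) : Prop :=
  ∀ (n : ℕ) (hn : 1 ≤ n) (i : Fin n → Fin k), Alternating i →
    ∀ a : Fin n → A, (∀ m, a m ∈ S (i m)) → (∀ m, φ (a m) = 0) →
      φ (List.ofFn a).prod = 0 ∧
      ((Odd n ∧ ∀ m : Fin n, i m = i m.rev) →
        φ' (List.ofFn a).prod =
          (∏ j : Fin ((n - 1) / 2),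
              φ (a ⟨j, by have := j.isLt; omega⟩ *
                 a ⟨n - 1 - j, by have := j.isLt; omega⟩)) *
            φ' (a ⟨n / 2, by omega⟩)) ∧
      (¬(Odd n ∧ ∀ m : Fin n, i m = i m.rev) → φ' (List.ofFn a).prod = 0)


section CyclicHelpers

open Finset

lemma mem_NC {n : ℕ} {π : Finset (Finset (Fin n))} :
    π ∈ NC n ↔ IsPartition π ∧ IsNonCrossing π := by
  classical
  simp [NC]

lemma kappa_congr {A : Type*} {R : Type*} (κ : ∀ n : ℕ, (Fin n → A) → R)
    {m m' : ℕ} (h : m = m') {f : Fin m → A} {f' : Fin m' → A}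
    (hf : ∀ i : Fin m, f i = f' (Fin.cast h i)) : κ m f = κ m' f' := by
  subst h
  exact congrArg (κ m) (funext fun i => hf i)

lemma rot_val {n : ℕ} (i : Fin n) :
    ((finRotate n i : Fin n) : ℕ) = ((i : ℕ) + 1) % n := by
  cases n with
  | zero => exact i.elim0
  | succ n =>
    rw [finRotate_succ_apply]
    by_cases h : i = Fin.last n
    · subst h
      rw [Fin.val_add_one, if_pos rfl, Fin.val_last]
      exact (Nat.mod_self _).symm
    · rw [Fin.val_add_one, if_neg h]
      exact (Nat.mod_eq_of_lt (by have := Fin.val_lt_last h; omega)).symm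

lemma rot_symm_val {n : ℕ} (hn : 2 ≤ n) (i : Fin n) :
    (((finRotate n).symm i : Fin n) : ℕ) = ((i : ℕ) + (n - 1)) % n := by
  set j := (finRotate n).symm i with hj
  have hji : finRotate n j = i := (finRotate n).apply_symm_apply i
  have h1 : ((j : ℕ) + 1) % n = (i : ℕ) := by rw [← rot_val j, hji]
  have hjlt := j.isLt
  have hilt := i.isLt
  rcases Nat.lt_or_ge ((j : ℕ) + 1) n with h' | h'
  · rw [Nat.mod_eq_of_lt h'] at h1
    have h2 : (i : ℕ) + (n - 1) = (j : ℕ) + n := by omega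
    rw [h2, Nat.add_mod_right, Nat.mod_eq_of_lt hjlt]
  · have h2 : (j : ℕ) = n - 1 := by omega
    have h3 : ((j : ℕ) + 1) % n = 0 := by
      have h4 : (j : ℕ) + 1 = n := by omega
      rw [h4, Nat.mod_self]
    have h4 : (i : ℕ) = 0 := by omega
    rw [h4, h2, Nat.zero_add, Nat.mod_eq_of_lt (by omega)]

/-- The map on block sets induced by a permutation of `Fin n`. -/
def blockEmb {n : ℕ} (e : Fin n ≃ Fin n) : Finset (Fin n) ↪ Finset (Fin n) :=
  ⟨fun V => V.map e.toEmbedding, Finset.map_injective _⟩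

@[simp] lemma blockEmb_apply {n : ℕ} (e : Fin n ≃ Fin n) (V : Finset (Fin n)) :
    blockEmb e V = V.map e.toEmbedding := rfl

lemma isPartition_map {n : ℕ} (e : Fin n ≃ Fin n) {π : Finset (Finset (Fin n))}
    (hπ : IsPartition π) :
    IsPartition (π.map (blockEmb e)) := by
  constructor
  · intro V hV
    rcases Finset.mem_map.1 hV with ⟨W, hW, rfl⟩
    rw [blockEmb_apply]
    exact Finset.Nonempty.map (hπ.1 W hW)
  · intro i
    obtain ⟨V, ⟨hV, hiV⟩, huniq⟩ := hπ.2 (e.symm i)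
    refine ⟨V.map e.toEmbedding, ⟨?_, ?_⟩, ?_⟩
    · exact Finset.mem_map.2 ⟨V, hV, rfl⟩
    · exact Finset.mem_map.2 ⟨e.symm i, hiV, e.apply_symm_apply i⟩
    · rintro W' ⟨hW', hiW'⟩
      rcases Finset.mem_map.1 hW' with ⟨W, hW, rfl⟩
      rw [blockEmb_apply] at hiW' ⊢
      rcases Finset.mem_map.1 hiW' with ⟨w, hw, hwe⟩
      have hwi : w = e.symm i := by
        have h5 : e w = i := hwe
        rw [← h5, e.symm_apply_apply]
      subst hwi
      rw [huniq W ⟨hW, hw⟩]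

lemma map_symm_cancel {n : ℕ} (e : Fin n ≃ Fin n) (V : Finset (Fin n)) :
    (V.map e.toEmbedding).map e.symm.toEmbedding = V := by
  ext i
  simp only [Finset.mem_map, Equiv.coe_toEmbedding]
  constructor
  · rintro ⟨a, ⟨x, hx, rfl⟩, rfl⟩
    simpa using hx
  · intro hi
    exact ⟨e i, ⟨i, hi, rfl⟩, e.symm_apply_apply i⟩

lemma pmap_symm_cancel {n : ℕ} (e : Fin n ≃ Fin n) (π : Finset (Finset (Fin n))) :
    (π.map (blockEmb e)).map (blockEmb e.symm) = π := by
  ext V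
  simp only [Finset.mem_map, blockEmb_apply]
  constructor
  · rintro ⟨V', ⟨W, hW, rfl⟩, rfl⟩
    rwa [map_symm_cancel]
  · intro hV
    exact ⟨V.map e.toEmbedding, ⟨V, hV, rfl⟩, map_symm_cancel e V⟩

lemma partition_univ_block {n : ℕ} {π : Finset (Finset (Fin n))}
    (hπ : IsPartition π) (hu : Finset.univ ∈ π) : π = {Finset.univ} := by
  apply Finset.eq_singleton_iff_unique_mem.2 ⟨hu, ?_⟩
  intro W hW
  obtain ⟨w, hw⟩ := hπ.1 W hW
  obtain ⟨V, hV, huniq⟩ := hπ.2 w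
  rw [huniq W ⟨hW, hw⟩, huniq Finset.univ ⟨hu, Finset.mem_univ w⟩]

lemma block_card_lt {n : ℕ} {π : Finset (Finset (Fin n))} (hπ : IsPartition π)
    (hne : π ≠ {Finset.univ}) {W : Finset (Fin n)} (hW : W ∈ π) : W.card < n := by
  have h1 : W.card ≤ n := by
    have h2 := Finset.card_le_univ W
    simpa using h2
  rcases lt_or_eq_of_le h1 with h | h
  · exact h
  · exfalso
    have hWu : W = Finset.univ := Finset.eq_univ_of_card W (by simp [h])
    subst hWu
    exact hne (partition_univ_block hπ hW)

lemma full_mem_NC {n : ℕ} (hn : 0 < n) :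
    ({Finset.univ} : Finset (Finset (Fin n))) ∈ NC n := by
  rw [mem_NC]
  refine ⟨⟨?_, ?_⟩, ?_⟩
  · intro V hV
    rw [Finset.mem_singleton] at hV
    subst hV
    exact ⟨⟨0, hn⟩, Finset.mem_univ _⟩
  · intro i
    exact ⟨Finset.univ, ⟨Finset.mem_singleton_self _, Finset.mem_univ i⟩,
      fun W hW => Finset.mem_singleton.1 hW.1⟩
  · intro p q r s _ _ _ V hV W hW _ _ _ _
    rw [Finset.mem_singleton.1 hV, Finset.mem_singleton.1 hW]

lemma crossing_cyclic {n : ℕ} {π : Finset (Finset (Fin n))} (hπ : IsNonCrossing π)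
    {V W : Finset (Fin n)} (hV : V ∈ π) (hW : W ∈ π) {p q r s : Fin n}
    (hp : p ∈ V) (hr : r ∈ V) (hq : q ∈ W) (hs : s ∈ W)
    (h : (p < q ∧ q < r ∧ r < s) ∨ (q < r ∧ r < s ∧ s < p) ∨
         (r < s ∧ s < p ∧ p < q) ∨ (s < p ∧ p < q ∧ q < r)) : V = W := by
  rcases h with ⟨h1, h2, h3⟩ | ⟨h1, h2, h3⟩ | ⟨h1, h2, h3⟩ | ⟨h1, h2, h3⟩
  · exact hπ p q r s h1 h2 h3 V hV W hW hp hr hq hs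
  · exact (hπ q r s p h1 h2 h3 W hW V hV hq hs hr hp).symm
  · exact hπ r s p q h1 h2 h3 V hV W hW hr hp hs hq
  · exact (hπ s p q r h1 h2 h3 W hW V hV hs hq hp hr).symm

lemma mod_cases' {a c d n : ℕ} (h : (a + c) % n = d) (ha : a < n) (hc : c < n) :
    a + c = d ∨ a + c = d + n := by
  rcases Nat.lt_or_ge (a + c) n with h' | h'
  · left
    rw [Nat.mod_eq_of_lt h'] at h
    omega
  · right
    have h2 : (a + c) % n = a + c - n := by
      rw [Nat.mod_eq_sub_mod h', Nat.mod_eq_of_lt (by omega)]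
    omega

lemma isNonCrossing_map {n c : ℕ} (hc : c < n) (e : Fin n ≃ Fin n)
    (he : ∀ i : Fin n, ((e i : Fin n) : ℕ) = ((i : ℕ) + c) % n)
    {π : Finset (Finset (Fin n))} (hπ : IsNonCrossing π) :
    IsNonCrossing (π.map (blockEmb e)) := by
  intro p q r s hpq hqr hrs V' hV' W' hW' hpV hrV hqW hsW
  rcases Finset.mem_map.1 hV' with ⟨V, hV, rfl⟩
  rcases Finset.mem_map.1 hW' with ⟨W, hW, rfl⟩
  rw [blockEmb_apply] at hpV hrV hqW hsW
  rcases Finset.mem_map.1 hpV with ⟨p0, hp0, hpe⟩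
  rcases Finset.mem_map.1 hqW with ⟨q0, hq0, hqe⟩
  rcases Finset.mem_map.1 hrV with ⟨r0, hr0, hre⟩
  rcases Finset.mem_map.1 hsW with ⟨s0, hs0, hse⟩
  suffices hVW : V = W by rw [hVW]
  refine crossing_cyclic hπ hV hW hp0 hr0 hq0 hs0 ?_
  have hp' : ((p0 : ℕ) + c) % n = (p : ℕ) := by
    rw [← he p0]; exact congrArg Fin.val hpe
  have hq' : ((q0 : ℕ) + c) % n = (q : ℕ) := by
    rw [← he q0]; exact congrArg Fin.val hqe
  have hr' : ((r0 : ℕ) + c) % n = (r : ℕ) := by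
    rw [← he r0]; exact congrArg Fin.val hre
  have hs' : ((s0 : ℕ) + c) % n = (s : ℕ) := by
    rw [← he s0]; exact congrArg Fin.val hse
  have Hp := mod_cases' hp' p0.isLt hc
  have Hq := mod_cases' hq' q0.isLt hc
  have Hr := mod_cases' hr' r0.isLt hc
  have Hs := mod_cases' hs' s0.isLt hc
  have hplt := p.isLt
  have hqlt := q.isLt
  have hrlt := r.isLt
  have hslt := s.isLt
  have hp0lt := p0.isLt
  have hq0lt := q0.isLt
  have hr0lt := r0.isLt
  have hs0lt := s0.isLt
  simp only [Fin.lt_def] at hpq hqr hrs ⊢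
  omega

/-- The key block-level comparison. -/
lemma block_eq {A : Type*} {R : Type*} (κ : ∀ n : ℕ, (Fin n → A) → R)
    {k : ℕ} (b : Fin (k + 2) → A)
    {W : Finset (Fin (k + 2))} (hWne : W.Nonempty)
    (hIH : ∀ t : Fin W.card → A, (∀ j, ∃ x, t j = b x) →
      κ W.card t = κ W.card (fun i => t (finRotate W.card i))) :
    κ W.card (restrict (fun m => b (finRotate (k + 2) m)) W)
      = κ (W.map (finRotate (k + 2)).toEmbedding).card
          (restrict b (W.map (finRotate (k + 2)).toEmbedding)) := by
  set σ := finRotate (k + 2) with hσ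
  set W' := W.map σ.toEmbedding with hW'
  have hm : W'.card = W.card := Finset.card_map _
  have hm1 : 0 < W.card := Finset.card_pos.2 hWne
  by_cases hlast : Fin.last (k + 1) ∈ W
  · -- wrapping case
    have htop : W.orderEmbOfFin rfl ⟨W.card - 1, by omega⟩ = Fin.last (k + 1) := by
      rw [Finset.orderEmbOfFin_last rfl hm1]
      exact le_antisymm (Fin.le_last _) (Finset.le_max' W _ hlast)
    have hbelow : ∀ j : Fin W.card, (j : ℕ) < W.card - 1 →
        ((W.orderEmbOfFin rfl j : Fin (k + 2)) : ℕ) < k + 1 := by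
      intro j hj
      have h1 : W.orderEmbOfFin rfl j < W.orderEmbOfFin rfl ⟨W.card - 1, by omega⟩ :=
        (W.orderEmbOfFin rfl).strictMono (by rw [Fin.lt_def]; exact hj)
      rw [htop] at h1
      exact h1
    have hσlast : σ (Fin.last (k + 1)) = (0 : Fin (k + 2)) := by
      apply Fin.ext
      rw [hσ, rot_val, Fin.val_last, Fin.val_zero]
      exact Nat.mod_self _
    set G : Fin W.card → Fin (k + 2) := fun j =>
      if h0 : (j : ℕ) = 0 then σ (W.orderEmbOfFin rfl ⟨W.card - 1, by omega⟩)
      else σ (W.orderEmbOfFin rfl ⟨(j : ℕ) - 1, by omega⟩) with hG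
    have hG0 : ∀ j : Fin W.card, (j : ℕ) = 0 → G j = 0 := by
      intro j hj
      simp only [hG]
      rw [dif_pos hj, htop, hσlast]
    have hGposval : ∀ j : Fin W.card, (hj : (j : ℕ) ≠ 0) →
        ((G j : Fin (k + 2)) : ℕ)
          = ((W.orderEmbOfFin rfl ⟨(j : ℕ) - 1, by omega⟩ : Fin (k + 2)) : ℕ) + 1 := by
      intro j hj
      have hbel : ((W.orderEmbOfFin rfl ⟨(j : ℕ) - 1, by omega⟩ : Fin (k + 2)) : ℕ) < k + 1 := by
        apply hbelow
        have := j.isLt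
        simp only [] at *
        omega
      simp only [hG]
      rw [dif_neg hj, hσ, rot_val, Nat.mod_eq_of_lt (by omega)]
    have hGmono : StrictMono G := by
      intro i j hij
      rw [Fin.lt_def] at hij
      have hj0 : (j : ℕ) ≠ 0 := by omega
      rw [Fin.lt_def]
      by_cases hi0 : (i : ℕ) = 0
      · rw [hG0 i hi0, hGposval j hj0, Fin.val_zero]
        omega
      · rw [hGposval i hi0, hGposval j hj0]
        have hlt : W.orderEmbOfFin rfl ⟨(i : ℕ) - 1, by omega⟩
            < W.orderEmbOfFin rfl ⟨(j : ℕ) - 1, by omega⟩ :=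
          (W.orderEmbOfFin rfl).strictMono (by rw [Fin.lt_def]; simp only []; omega)
        rw [Fin.lt_def] at hlt
        omega
    have hGmem : ∀ x, G x ∈ W' := by
      intro x
      simp only [hG]
      by_cases h0 : (x : ℕ) = 0
      · rw [dif_pos h0]
        exact Finset.mem_map.2 ⟨_, Finset.orderEmbOfFin_mem _ _ _, rfl⟩
      · rw [dif_neg h0]
        exact Finset.mem_map.2 ⟨_, Finset.orderEmbOfFin_mem _ _ _, rfl⟩
    have hGkey : ∀ i : Fin W.card, W'.orderEmbOfFin hm i = G i := by
      have h6 := Finset.orderEmbOfFin_unique hm hGmem hGmono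
      intro i
      exact (congrFun h6 i).symm
    set t : Fin W.card → A := fun i => restrict b W' (Fin.cast hm.symm i) with ht
    have step1 : κ W'.card (restrict b W') = κ W.card t := by
      apply kappa_congr κ hm
      intro i
      rfl
    have step2 : κ W.card t = κ W.card (fun i => t (finRotate W.card i)) := by
      apply hIH
      intro j
      exact ⟨_, rfl⟩
    have step3 : (fun i => t (finRotate W.card i))
        = restrict (fun m => b (σ m)) W := by
      funext j
      have htval : t (finRotate W.card j)
          = b (W'.orderEmbOfFin hm (finRotate W.card j)) := by
        simp only [ht]
        show b ((W'.orderIsoOfFin rfl (Fin.cast hm.symm (finRotate W.card j))).1) = _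
        have h7 : (W'.orderIsoOfFin rfl (Fin.cast hm.symm (finRotate W.card j))).1
            = W'.orderEmbOfFin rfl (Fin.cast hm.symm (finRotate W.card j)) := rfl
        rw [h7]
        exact congrArg b (Finset.orderEmbOfFin_eq_orderEmbOfFin_iff.2 rfl)
      have hrotval : ((finRotate W.card j : Fin W.card) : ℕ) = ((j : ℕ) + 1) % W.card :=
        rot_val j
      have hfinal : G (finRotate W.card j) = σ (W.orderEmbOfFin rfl j) := by
        by_cases hjtop : (j : ℕ) = W.card - 1
        · have h0 : ((finRotate W.card j : Fin W.card) : ℕ) = 0 := by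
            rw [hrotval, hjtop]
            have h8 : W.card - 1 + 1 = W.card := by omega
            rw [h8, Nat.mod_self]
          have hjemb : W.orderEmbOfFin rfl j = Fin.last (k + 1) := by
            have hjeq : j = (⟨W.card - 1, by omega⟩ : Fin W.card) := Fin.ext hjtop
            rw [hjeq]
            exact htop
          rw [hG0 _ h0, hjemb, hσlast]
        · have hne0 : ((finRotate W.card j : Fin W.card) : ℕ) ≠ 0 := by
            rw [hrotval, Nat.mod_eq_of_lt (by have := j.isLt; omega)]
            omega
          simp only [hG]
          rw [dif_neg hne0]
          refine congrArg σ (congrArg (W.orderEmbOfFin rfl) (Fin.ext ?_))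
          show ((finRotate W.card j : Fin W.card) : ℕ) - 1 = (j : ℕ)
          rw [hrotval, Nat.mod_eq_of_lt (by have := j.isLt; omega)]
          omega
      rw [htval, hGkey, hfinal]
      rfl
    calc κ W.card (restrict (fun m => b (σ m)) W)
        = κ W.card (fun i => t (finRotate W.card i)) := by rw [step3]
      _ = κ W.card t := step2.symm
      _ = κ W'.card (restrict b W') := step1.symm
  · -- non-wrapping case
    have hmono : StrictMono (fun i : Fin W.card => σ (W.orderEmbOfFin rfl i)) := by
      intro i j hij
      have h1 : W.orderEmbOfFin rfl i < W.orderEmbOfFin rfl j :=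
        (W.orderEmbOfFin rfl).strictMono hij
      have hjv : ((W.orderEmbOfFin rfl j : Fin (k + 2)) : ℕ) < k + 1 := by
        have hmem := Finset.orderEmbOfFin_mem W rfl j
        have hne : W.orderEmbOfFin rfl j ≠ Fin.last (k + 1) := by
          intro h
          exact hlast (h ▸ hmem)
        exact Fin.val_lt_last hne
      rw [Fin.lt_def] at h1 ⊢
      rw [hσ, rot_val, rot_val, Nat.mod_eq_of_lt (by omega), Nat.mod_eq_of_lt (by omega)]
      omega
    have hmem : ∀ x, (fun i : Fin W.card => σ (W.orderEmbOfFin rfl i)) x ∈ W' := by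
      intro x
      exact Finset.mem_map.2 ⟨_, Finset.orderEmbOfFin_mem _ _ _, rfl⟩
    have hkey : ∀ i : Fin W.card, W'.orderEmbOfFin hm i = σ (W.orderEmbOfFin rfl i) := by
      have h6 := Finset.orderEmbOfFin_unique hm hmem hmono
      intro i
      exact (congrFun h6 i).symm
    symm
    apply kappa_congr κ hm
    intro i
    show b ((W'.orderIsoOfFin rfl i).1) = _
    have h1 : (W'.orderIsoOfFin rfl i).1 = W'.orderEmbOfFin rfl i := rfl
    have h2 : W'.orderEmbOfFin rfl i = W'.orderEmbOfFin hm (Fin.cast hm i) :=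
      Finset.orderEmbOfFin_eq_orderEmbOfFin_iff.2 rfl
    rw [h1, h2, hkey]
    rfl

end CyclicHelpers

/-- If `φ̃ : A → G` restricts to a trace on a unital subalgebra
`B`, then the G-valued cumulants are invariant under cyclic permutation of
arguments from `B`. -/
theorem grassmann_cumulant_cyclic_of_trace
    {A : Type*} [Ring A] [Algebra ℂ A]
    (φ : A →ₗ[ℂ] DualNumber ℂ) (hφ1 : φ 1 = 1)
    (κ : ∀ n : ℕ, (Fin n → A) → DualNumber ℂ)
    (hκ : MomentCumulant (⇑φ) κ)
    (B : Subalgebra ℂ A)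
    (htrace : ∀ b ∈ B, ∀ c ∈ B, φ (b * c) = φ (c * b)) :
    ∀ (n : ℕ), 2 ≤ n → ∀ b : Fin n → A, (∀ m, b m ∈ B) →
      κ n b = κ n (fun m => b (finRotate n m)) := by
  suffices H : ∀ n : ℕ, ∀ b : Fin n → A, (∀ m, b m ∈ B) →
      κ n b = κ n (fun m => b (finRotate n m)) by
    intro n _ b hb
    exact H n b hb
  intro n
  induction n using Nat.strong_induction_on with
  | _ n IH =>
    match n, IH with
    | 0, _ =>
      intro b hb
      exact congrArg (κ 0) (funext fun i => i.elim0)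
    | 1, _ =>
      intro b hb
      exact congrArg (κ 1) (funext fun i => congrArg b (Subsingleton.elim i _))
    | (k + 2), IH =>
      intro b hb
      -- the trace property gives equality of the relevant moments
      have hσlastv : b (finRotate (k + 2) (Fin.last (k + 1))) = b 0 := by
        congr 1
        apply Fin.ext
        rw [rot_val, Fin.val_last, Fin.val_zero]
        exact Nat.mod_self _
      have hc_cast : (fun i : Fin (k + 1) => b (finRotate (k + 2) i.castSucc))
          = (fun i : Fin (k + 1) => b i.succ) := by
        funext i
        congr 1
        apply Fin.ext
        rw [rot_val, Fin.coe_castSucc, Fin.val_succ,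
          Nat.mod_eq_of_lt (by have := i.isLt; omega)]
      have hlist : List.ofFn (fun m => b (finRotate (k + 2) m))
          = (List.ofFn (fun i : Fin (k + 1) => b i.succ)).concat (b 0) := by
        rw [List.ofFn_succ']
        congr 1
        exact congrArg List.ofFn hc_cast
      have h1 : (List.ofFn (fun m => b (finRotate (k + 2) m))).prod
          = (List.ofFn (fun i : Fin (k + 1) => b i.succ)).prod * b 0 := by
        rw [hlist, List.prod_concat]
      have h2 : (List.ofFn b).prod
          = b 0 * (List.ofFn (fun i : Fin (k + 1) => b i.succ)).prod := by
        rw [List.ofFn_succ (f := b), List.prod_cons]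
      have hT : (List.ofFn (fun i : Fin (k + 1) => b i.succ)).prod ∈ B := by
        apply Subalgebra.list_prod_mem
        intro x hx
        rw [List.mem_ofFn] at hx
        obtain ⟨i, rfl⟩ := hx
        exact hb _
      have hφeq : φ ((List.ofFn (fun m => b (finRotate (k + 2) m))).prod)
          = φ ((List.ofFn b).prod) := by
        rw [h1, h2]
        exact htrace _ hT _ (hb 0)
      -- splitting off the full partition
      have hfull : ({Finset.univ} : Finset (Finset (Fin (k + 2)))) ∈ NC (k + 2) :=
        full_mem_NC (by omega)
      have hcardU : (Finset.univ : Finset (Fin (k + 2))).card = k + 2 := by simp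
      have hembU : ∀ i : Fin ((Finset.univ : Finset (Fin (k + 2))).card),
          (Finset.univ : Finset (Fin (k + 2))).orderEmbOfFin rfl i = Fin.cast hcardU i := by
        have h6 := Finset.orderEmbOfFin_unique (s := (Finset.univ : Finset (Fin (k + 2))))
          (f := fun i => Fin.cast hcardU i) rfl (fun x => Finset.mem_univ _)
          (fun i j hij => hij)
        intro i
        exact (congrFun h6 i).symm
      have hPfull : ∀ a : Fin (k + 2) → A,
          ∏ V ∈ ({Finset.univ} : Finset (Finset (Fin (k + 2)))),
            κ V.card (restrict a V) = κ (k + 2) a := by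
        intro a
        rw [Finset.prod_singleton]
        apply kappa_congr κ hcardU
        intro i
        exact congrArg a (hembU i)
      have hsplit : ∀ a : Fin (k + 2) → A,
          ∑ π ∈ NC (k + 2), ∏ V ∈ π, κ V.card (restrict a V)
            = κ (k + 2) a + ∑ π ∈ (NC (k + 2)).erase {Finset.univ},
                ∏ V ∈ π, κ V.card (restrict a V) := by
        intro a
        rw [← Finset.add_sum_erase _ _ hfull, hPfull a]
      -- the rotation bijection on non-full noncrossing partitions
      have hcancel2 : ∀ π' : Finset (Finset (Fin (k + 2))),
          (π'.map (blockEmb (finRotate (k + 2)).symm)).map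
            (blockEmb (finRotate (k + 2))) = π' := by
        intro π'
        have h9 := pmap_symm_cancel (finRotate (k + 2)).symm π'
        rwa [Equiv.symm_symm] at h9
      have hS : ∑ π ∈ (NC (k + 2)).erase {Finset.univ},
            ∏ V ∈ π, κ V.card (restrict (fun m => b (finRotate (k + 2) m)) V)
          = ∑ π ∈ (NC (k + 2)).erase {Finset.univ},
            ∏ V ∈ π, κ V.card (restrict b V) := by
        refine Finset.sum_nbij' (fun π => π.map (blockEmb (finRotate (k + 2))))
          (fun π => π.map (blockEmb (finRotate (k + 2)).symm)) ?_ ?_ ?_ ?_ ?_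
        · intro π hπ
          rcases Finset.mem_erase.1 hπ with ⟨hne, hmem⟩
          rw [mem_NC] at hmem
          refine Finset.mem_erase.2 ⟨?_, mem_NC.2 ⟨isPartition_map _ hmem.1,
            isNonCrossing_map (c := 1) (by omega) _ (fun i => rot_val i) hmem.2⟩⟩
          intro hcontra
          apply hne
          have h9 := congrArg (Finset.map (blockEmb (finRotate (k + 2)).symm)) hcontra
          rw [pmap_symm_cancel] at h9
          rw [h9, Finset.map_singleton, blockEmb_apply, Finset.map_univ_equiv]
        · intro π hπ
          rcases Finset.mem_erase.1 hπ with ⟨hne, hmem⟩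
          rw [mem_NC] at hmem
          refine Finset.mem_erase.2 ⟨?_, mem_NC.2 ⟨isPartition_map _ hmem.1,
            isNonCrossing_map (c := k + 1) (by omega) _
              (fun i => rot_symm_val (by omega) i) hmem.2⟩⟩
          intro hcontra
          apply hne
          have h9 := congrArg (Finset.map (blockEmb (finRotate (k + 2)))) hcontra
          rw [hcancel2] at h9
          rw [h9, Finset.map_singleton, blockEmb_apply, Finset.map_univ_equiv]
        · intro π _
          exact pmap_symm_cancel _ π
        · intro π _
          exact hcancel2 π
        · intro π hπ
          rcases Finset.mem_erase.1 hπ with ⟨hne, hmem⟩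
          rw [mem_NC] at hmem
          rw [Finset.prod_map]
          refine Finset.prod_congr rfl ?_
          intro W hW
          refine block_eq κ b (hmem.1.1 W hW) ?_
          intro t ht
          exact IH W.card (block_card_lt hmem.1 hne hW) t
            (fun j => by obtain ⟨x, hx⟩ := ht j; rw [hx]; exact hb x)
      have eb := hκ (k + 2) (by omega) b
      have ec := hκ (k + 2) (by omega) (fun m => b (finRotate (k + 2) m))
      rw [hsplit b] at eb
      rw [hsplit (fun m => b (finRotate (k + 2) m))] at ec
      linear_combination ec - eb - hφeq + hS

end InfFree
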